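/- Let μ > 1 and 0 < ν < 1 with μν > 1. Suppose t_i, p_i, t_j, p_j ≥ 0 satisfy p_i ≥ μ·t_i, p_j ≥ μ·t_j, min(p_i,p_j) ≥ ν·max(p_i,p_j), min(t_i,t_j) ≥ ν·max(t_i,t_j), and WLOG t_i < t_j. Then (t_i + t_j + min(p_i,p_j)) / (min(t_i,t_j) + min(p_i,p_j)) ≤ 1 + 1/(ν(μ+1)). -/
import Mathlib


theorem special_arc_ratio
    (μ ν : ℝ) (hμ : 1 < μ) (hν0 : 0 < ν) (hν1 : ν < 1) (hμν : 1 < μ * ν)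
    (ti pi tj pj : ℝ)
    (hti : 0 ≤ ti) (hpi : 0 ≤ pi) (htj : 0 ≤ tj) (hpj : 0 ≤ pj)
    (hi : pi ≥ μ * ti) (hj : pj ≥ μ * tj)
    (hp : min pi pj ≥ ν * max pi pj)
    (ht : min ti tj ≥ ν * max ti tj)
    (hij : ti < tj) :
    (ti + tj + min pi pj) / (min ti tj + min pi pj) ≤ 1 + 1 / (ν * (μ + 1)) := by
  have hmt : min ti tj = ti := min_eq_left hij.le
  have hMt : max ti tj = tj := max_eq_right hij.le
  rw [hmt]
  rw [hmt, hMt] at ht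
  set m := min pi pj with hm
  have hmpj : m ≥ ν * pj := le_trans (by nlinarith [le_max_right pi pj]) hp
  have hmμ : m ≥ ν * (μ * tj) := le_trans (by nlinarith) hmpj
  have htj0 : 0 < tj := lt_of_le_of_lt hti hij
  have hd : 0 < ti + m := by nlinarith
  have hpos : 0 < ν * (μ + 1) := by positivity
  have key : tj * (ν * (μ + 1)) ≤ ti + m := by nlinarith
  have h2 : tj ≤ (ti + m) / (ν * (μ + 1)) := (le_div_iff₀ hpos).mpr key
  rw [div_le_iff₀ hd, add_mul, one_mul, one_div_mul_eq_div]
  linarith
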